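/- arXiv:2112.03746 — 3 statements merged into one kernel-verified Lean document; each statement's English description precedes it below -/
import Mathlib

section
/- Fix λ ∈ (0,1) and ε > 0 with λ − ε > 0. Let q be a prime and let n be the minimal number of quantum basis states among all MO-1QFA over the unary alphabet {0} that recognize L(q) = {0^{zq} : z ∈ ℕ} with cut-point λ isolated by ε. Let p be a prime with p > (1 + 2/ε)^{2n}. If a 1QFAC over {0} with k' classical states and n' quantum basis states, where n' < n, recognizes L(pq) = {0^{zpq} : z ∈ ℕ} with cut-point λ isolated by ε, then k' ≥ pq. -/
noncomputable section

/-- The `n`-dimensional complex Hilbert space `ℂⁿ`. -/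
abbrev QState (n : ℕ) := EuclideanSpace ℂ (Fin n)

/-- Apply a matrix to a vector of `ℂⁿ`. -/
def mApply {n : ℕ} (M : Matrix (Fin n) (Fin n) ℂ) (v : QState n) : QState n :=
  Matrix.toEuclideanLin M v

/-- A 1QFAC: classical states `S` with initial state and transitions, an `n`-dimensional
quantum part with a unit initial vector, a unitary for each (classical state, letter),
and an orthogonal projection (accepting measurement) for each classical state. -/
structure QFAC (Alph : Type) (S : Type) (n : ℕ) where
  s0 : S
  tr : S → Alph → S
  ψ0 : QState n
  ψ0_unit : ‖ψ0‖ = 1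
  U : S → Alph → Matrix (Fin n) (Fin n) ℂ
  U_unitary : ∀ s σ, U s σ ∈ Matrix.unitaryGroup (Fin n) ℂ
  P : S → Matrix (Fin n) (Fin n) ℂ
  P_proj : ∀ s, (P s).conjTranspose = P s ∧ P s * P s = P s

namespace QFAC
variable {Alph S : Type} {n : ℕ}

/-- `s_x`: the classical state reached after reading `x`. -/
def sState (A : QFAC Alph S n) (x : List Alph) : S := x.foldl A.tr A.s0

/-- `|ψ_x⟩`: the final quantum state after reading `x`. -/
def qState (A : QFAC Alph S n) (x : List Alph) : QState n :=
  (x.foldl (fun p σ => (A.tr p.1 σ, mApply (A.U p.1 σ) p.2)) (A.s0, A.ψ0)).2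

/-- Acceptance probability `‖P_{s_x,acc}|ψ_x⟩‖²`. -/
def probAcc (A : QFAC Alph S n) (x : List Alph) : ℝ :=
  ‖mApply (A.P (A.sState x)) (A.qState x)‖ ^ 2

/-- Recognition with cut-point `lam` isolated by `ε`. -/
def Recognizes (A : QFAC Alph S n) (L : Set (List Alph)) (lam ε : ℝ) : Prop :=
  (∀ x ∈ L, lam + ε ≤ A.probAcc x) ∧ (∀ x ∉ L, A.probAcc x ≤ lam - ε)

end QFAC

/-- An MO-1QFA over alphabet `Alph` with `n` quantum basis states. -/
structure MOQFA (Alph : Type) (n : ℕ) where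
  ψ0 : QState n
  ψ0_unit : ‖ψ0‖ = 1
  U : Alph → Matrix (Fin n) (Fin n) ℂ
  U_unitary : ∀ σ, U σ ∈ Matrix.unitaryGroup (Fin n) ℂ
  P : Matrix (Fin n) (Fin n) ℂ
  P_proj : P.conjTranspose = P ∧ P * P = P

namespace MOQFA
variable {Alph : Type} {n : ℕ}

def qState (A : MOQFA Alph n) (x : List Alph) : QState n :=
  x.foldl (fun v σ => mApply (A.U σ) v) A.ψ0

def probAcc (A : MOQFA Alph n) (x : List Alph) : ℝ := ‖mApply A.P (A.qState x)‖ ^ 2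

def Recognizes (A : MOQFA Alph n) (L : Set (List Alph)) (lam ε : ℝ) : Prop :=
  (∀ x ∈ L, lam + ε ≤ A.probAcc x) ∧ (∀ x ∉ L, A.probAcc x ≤ lam - ε)

end MOQFA

/-- The unary language `L(d) = {0^{zd} : z ∈ ℕ}` over the one-letter alphabet. -/
def Ld (d : ℕ) : Set (List Unit) := {x | d ∣ x.length}

namespace StmtAux

lemma mApply_mul {n : ℕ} (M N : Matrix (Fin n) (Fin n) ℂ) (v : QState n) :
    mApply (M * N) v = mApply M (mApply N v) := by
  simp [mApply, Matrix.toEuclideanLin_apply, Matrix.mulVec_mulVec]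

lemma mApply_one {n : ℕ} (v : QState n) : mApply 1 v = v := by
  simp [mApply, Matrix.toEuclideanLin_apply]

lemma mApply_sub {n : ℕ} (M : Matrix (Fin n) (Fin n) ℂ) (v w : QState n) :
    mApply M (v - w) = mApply M v - mApply M w := by
  simp [mApply]

lemma inner_mApply {n : ℕ} (M : Matrix (Fin n) (Fin n) ℂ) (v w : QState n) :
    (inner ℂ (mApply M v) w) = inner ℂ v (mApply M.conjTranspose w) := by
  rw [mApply, mApply, Matrix.toEuclideanLin_conjTranspose_eq_adjoint]
  exact (LinearMap.adjoint_inner_right _ _ _).symm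

lemma norm_mApply_unitary {n : ℕ} {U : Matrix (Fin n) (Fin n) ℂ}
    (hU : U ∈ Matrix.unitaryGroup (Fin n) ℂ) (v : QState n) : ‖mApply U v‖ = ‖v‖ := by
  have h1 : U.conjTranspose * U = 1 := by
    have := Matrix.mem_unitaryGroup_iff'.mp hU
    simpa [Matrix.star_eq_conjTranspose] using this
  have h2 : (inner ℂ (mApply U v) (mApply U v)) = inner ℂ v v := by
    rw [inner_mApply, ← mApply_mul, h1, mApply_one]
  have h3 : ‖mApply U v‖ ^ 2 = ‖v‖ ^ 2 := by
    rw [← inner_self_eq_norm_sq (𝕜 := ℂ), ← inner_self_eq_norm_sq (𝕜 := ℂ), h2]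
  nlinarith [norm_nonneg (mApply U v), norm_nonneg v]

lemma norm_mApply_proj_le {n : ℕ} {P : Matrix (Fin n) (Fin n) ℂ}
    (hP : P.conjTranspose = P ∧ P * P = P) (v : QState n) : ‖mApply P v‖ ≤ ‖v‖ := by
  have h2 : (inner ℂ (mApply P v) (mApply P v)) = inner ℂ v (mApply P v) := by
    rw [inner_mApply, hP.1, ← mApply_mul, hP.2]
  have h3 : ‖mApply P v‖ ^ 2 ≤ ‖v‖ * ‖mApply P v‖ := by
    rw [← inner_self_eq_norm_sq (𝕜 := ℂ), h2]
    calc (RCLike.re (inner ℂ v (mApply P v))) ≤ ‖(inner ℂ v (mApply P v))‖ :=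
          RCLike.re_le_norm _
      _ ≤ ‖v‖ * ‖mApply P v‖ := norm_inner_le_norm _ _
  rcases le_or_gt ‖mApply P v‖ 0 with h | h
  · exact le_trans h (norm_nonneg v)
  · nlinarith

lemma prob_diff {n : ℕ} {P : Matrix (Fin n) (Fin n) ℂ}
    (hP : P.conjTranspose = P ∧ P * P = P) (a b : QState n) (ha : ‖a‖ = 1) (hb : ‖b‖ = 1) :
    ‖mApply P a‖ ^ 2 - ‖mApply P b‖ ^ 2 ≤ 2 * ‖a - b‖ := by
  have h1 : ‖mApply P a‖ ≤ 1 := by simpa [ha] using norm_mApply_proj_le hP a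
  have h2 : ‖mApply P b‖ ≤ 1 := by simpa [hb] using norm_mApply_proj_le hP b
  have h3 : ‖mApply P a‖ - ‖mApply P b‖ ≤ ‖a - b‖ := by
    have := norm_sub_norm_le (mApply P a) (mApply P b)
    rw [← mApply_sub] at this
    exact this.trans (norm_mApply_proj_le hP _)
  have h0 : (0:ℝ) ≤ ‖a - b‖ := norm_nonneg _
  nlinarith [norm_nonneg (mApply P a), norm_nonneg (mApply P b),
    mul_le_mul_of_nonneg_right h3 (by positivity : (0:ℝ) ≤ ‖mApply P a‖ + ‖mApply P b‖)]



open MeasureTheory Metric in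

lemma packing_real {d : ℕ} {ε : ℝ} (hε : 0 < ε) {p : ℕ}
    (v : Fin p → EuclideanSpace ℝ (Fin d)) (hv : ∀ i, ‖v i‖ ≤ 1)
    (hsep : ∀ i j, i ≠ j → ε ≤ dist (v i) (v j)) : (p : ℝ) ≤ (1 + 2 / ε) ^ d := by
  have hd : Module.finrank ℝ (EuclideanSpace ℝ (Fin d)) = d := by
    simp [finrank_euclideanSpace]
  have hε2 : (0:ℝ) < ε / 2 := by linarith
  -- pairwise disjoint balls
  have hdisj : Pairwise (Function.onFun Disjoint fun i => ball (v i) (ε / 2)) := by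
    intro i j hij
    apply Set.disjoint_left.mpr
    intro y hyi hyj
    have := hsep i j hij
    have h1 : dist (v i) (v j) ≤ dist (v i) y + dist y (v j) := dist_triangle _ _ _
    rw [mem_ball, dist_comm] at hyi
    rw [mem_ball, dist_comm y (v j)] at hyj
    rw [dist_comm y (v j)] at h1
    linarith
  have hsub : (⋃ i, ball (v i) (ε / 2)) ⊆ ball (0 : EuclideanSpace ℝ (Fin d)) (1 + ε / 2) := by
    intro y hy
    simp only [Set.mem_iUnion, mem_ball] at hy ⊢
    obtain ⟨i, hi⟩ := hy
    have : dist y 0 ≤ dist y (v i) + dist (v i) 0 := dist_triangle _ _ _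
    have h2 : dist (v i) 0 ≤ 1 := by simpa [dist_eq_norm] using hv i
    linarith
  have hball : ∀ i, volume (ball (v i) (ε / 2)) =
      ENNReal.ofReal ((ε / 2) ^ d) * volume (ball (0 : EuclideanSpace ℝ (Fin d)) 1) := by
    intro i
    rw [Measure.addHaar_ball_of_pos volume (v i) hε2, hd]
  have hbig : volume (ball (0 : EuclideanSpace ℝ (Fin d)) (1 + ε / 2)) =
      ENNReal.ofReal ((1 + ε / 2) ^ d) * volume (ball (0 : EuclideanSpace ℝ (Fin d)) 1) := by
    rw [Measure.addHaar_ball_of_pos volume _ (by linarith : (0:ℝ) < 1 + ε / 2), hd]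
  have hU := measure_iUnion (μ := volume) hdisj (fun i => measurableSet_ball)
  have hle : volume (⋃ i, ball (v i) (ε / 2)) ≤
      volume (ball (0 : EuclideanSpace ℝ (Fin d)) (1 + ε / 2)) := measure_mono hsub
  rw [hU] at hle
  rw [tsum_fintype] at hle
  simp only [hball, Finset.sum_const, Finset.card_univ, Fintype.card_fin, nsmul_eq_mul] at hle
  rw [hbig] at hle
  set B := volume (ball (0 : EuclideanSpace ℝ (Fin d)) 1) with hB
  have hB0 : B ≠ 0 := (measure_ball_pos volume _ one_pos).ne'
  have hBtop : B ≠ ⊤ := measure_ball_lt_top.ne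
  rw [← mul_assoc] at hle
  have hle2 : (p : ENNReal) * ENNReal.ofReal ((ε / 2) ^ d) ≤ ENNReal.ofReal ((1 + ε / 2) ^ d) :=
    (ENNReal.mul_le_mul_iff_left hB0 hBtop).mp hle
  have hre : (p : ℝ) * (ε / 2) ^ d ≤ (1 + ε / 2) ^ d := by
    rw [← ENNReal.ofReal_natCast p, ← ENNReal.ofReal_mul (by positivity)] at hle2
    exact (ENNReal.ofReal_le_ofReal_iff (by positivity)).mp hle2
  have hrw : (1 + 2 / ε) = (1 + ε / 2) / (ε / 2) := by field_simp; ring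
  rw [hrw, div_pow, le_div_iff₀ (by positivity)]
  exact hre


lemma finrank_qstate (m : ℕ) : Module.finrank ℝ (QState m) = 2 * m := by
  rw [← Module.finrank_mul_finrank ℝ ℂ (QState m)]
  simp [Complex.finrank_real_complex, finrank_euclideanSpace, mul_comm]

lemma packing {m : ℕ} {ε : ℝ} (hε : 0 < ε) {p : ℕ}
    (v : Fin p → QState m) (hv : ∀ i, ‖v i‖ ≤ 1)
    (hsep : ∀ i j, i ≠ j → ε ≤ dist (v i) (v j)) : (p : ℝ) ≤ (1 + 2 / ε) ^ (2 * m) := by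
  let e := (stdOrthonormalBasis ℝ (QState m)).repr
  have := packing_real (d := Module.finrank ℝ (QState m)) hε (fun i => e (v i))
    (fun i => by simpa using hv i)
    (fun i j hij => by simpa [e.dist_map] using hsep i j hij)
  rwa [finrank_qstate] at this


end StmtAux
namespace StmtAux

lemma list_unit_eq (x : List Unit) : x = List.replicate x.length () :=
  List.eq_replicate_length.mpr (fun b _ => rfl)

lemma moqfa_qState_replicate {n : ℕ} (B : MOQFA Unit n) (t : ℕ) :
    B.qState (List.replicate t ()) = mApply ((B.U ()) ^ t) B.ψ0 := by
  induction t with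
  | zero => simp [MOQFA.qState, mApply_one]
  | succ t ih =>
      rw [List.replicate_succ', MOQFA.qState, List.foldl_append]
      show mApply (B.U ()) (B.qState (List.replicate t ())) = _
      rw [ih, ← mApply_mul, ← pow_succ']

lemma moqfa_probAcc_replicate {n : ℕ} (B : MOQFA Unit n) (t : ℕ) :
    B.probAcc (List.replicate t ()) = ‖mApply B.P (mApply ((B.U ()) ^ t) B.ψ0)‖ ^ 2 := by
  rw [MOQFA.probAcc, moqfa_qState_replicate]

/-- The MO-1QFA with the same data but transition `U^e`. -/
def moqfaPow {n : ℕ} (B : MOQFA Unit n) (e : ℕ) : MOQFA Unit n :=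
  ⟨B.ψ0, B.ψ0_unit, fun _ => (B.U ()) ^ e, fun _ => pow_mem (B.U_unitary ()) e, B.P, B.P_proj⟩

lemma moqfaPow_probAcc {n : ℕ} (B : MOQFA Unit n) (e t : ℕ) :
    (moqfaPow B e).probAcc (List.replicate t ()) = B.probAcc (List.replicate (e * t) ()) := by
  rw [moqfa_probAcc_replicate, moqfa_probAcc_replicate]
  show ‖mApply B.P (mApply (((B.U ()) ^ e) ^ t) B.ψ0)‖ ^ 2 = _
  rw [← pow_mul]

/-- Scaling: an MO-1QFA for `L(e*f)` yields one (same size) for `L(f)`. -/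
lemma moqfa_scale {n e f : ℕ} {lam ε : ℝ} (he : 0 < e) (B : MOQFA Unit n)
    (h : B.Recognizes (Ld (e * f)) lam ε) :
    ∃ B' : MOQFA Unit n, B'.Recognizes (Ld f) lam ε := by
  refine ⟨moqfaPow B e, ?_, ?_⟩ <;> intro x hx <;>
    rw [list_unit_eq x, moqfaPow_probAcc]
  · exact h.1 _ (by simpa [Ld, List.length_replicate] using mul_dvd_mul_left e hx)
  · refine h.2 _ (fun hdvd => hx ?_)
    have : e * f ∣ e * x.length := by simpa [Ld, List.length_replicate] using hdvd
    exact (mul_dvd_mul_iff_left (by omega : e ≠ 0)).mp this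

end StmtAux
namespace StmtAux

lemma one_le_base {ε : ℝ} (hε : 0 < ε) : (1:ℝ) ≤ 1 + 2 / ε := by
  have : 0 < 2 / ε := by positivity
  linarith

/-- No MO-1QFA with few quantum states recognizes `L(p)` for huge `p`. -/
lemma no_small_moqfa {n' p : ℕ} {lam ε : ℝ} (hε : 0 < ε)
    (hp : (1 + 2 / ε) ^ (2 * n') < (p : ℝ))
    (B : MOQFA Unit n') (h : B.Recognizes (Ld p) lam ε) : False := by
  have hbase : (0:ℝ) < (1 + 2 / ε) ^ (2 * n') := by positivity
  have hp0 : 0 < p := by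
    by_contra h0
    interval_cases p
    · simp at hp; linarith
  set W := B.U () with hW
  set v : Fin p → QState n' := fun i => mApply (W ^ (i : ℕ)) B.ψ0 with hv
  have hWu : ∀ k : ℕ, W ^ k ∈ Matrix.unitaryGroup (Fin n') ℂ :=
    fun k => pow_mem (B.U_unitary ()) k
  have hnorm : ∀ i : Fin p, ‖v i‖ = 1 := fun i => by
    rw [hv]; rw [norm_mApply_unitary (hWu _), B.ψ0_unit]
  -- find two close points
  have hclose : ∃ i j : Fin p, (i : ℕ) < (j : ℕ) ∧ dist (v i) (v j) < ε := by
    by_contra hcon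
    push_neg at hcon
    have hsep : ∀ i j : Fin p, i ≠ j → ε ≤ dist (v i) (v j) := by
      intro i j hij
      rcases Ne.lt_or_gt hij with hlt | hlt
      · exact hcon i j (by exact_mod_cast hlt)
      · rw [dist_comm]; exact hcon j i (by exact_mod_cast hlt)
    have := packing hε v (fun i => (hnorm i).le) hsep
    have hlt : (1 + 2 / ε) ^ (2 * n') < (p : ℝ) := hp
    linarith
  obtain ⟨i, j, hij, hd⟩ := hclose
  set t₁ := (i : ℕ); set t₂ := (j : ℕ)
  have ht2 : t₂ < p := j.isLt
  set s := p - t₁ with hs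
  have h1s : t₁ + s = p := by omega
  -- the two final vectors
  set a := mApply (W ^ (t₁ + s)) B.ψ0 with ha
  set b := mApply (W ^ (t₂ + s)) B.ψ0 with hb
  have hav : a = mApply (W ^ s) (v i) := by
    rw [ha, hv, ← mApply_mul, ← pow_add, Nat.add_comm s t₁]
  have hbv : b = mApply (W ^ s) (v j) := by
    rw [hb, hv, ← mApply_mul, ← pow_add, Nat.add_comm s t₂]
  have hab : ‖a - b‖ < ε := by
    rw [hav, hbv, ← mApply_sub, norm_mApply_unitary (hWu s)]
    rwa [dist_eq_norm] at hd
  have hna : ‖a‖ = 1 := by rw [ha, norm_mApply_unitary (hWu _), B.ψ0_unit]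
  have hnb : ‖b‖ = 1 := by rw [hb, norm_mApply_unitary (hWu _), B.ψ0_unit]
  -- acceptance probabilities
  have hacc1 : lam + ε ≤ ‖mApply B.P a‖ ^ 2 := by
    have := h.1 (List.replicate (t₁ + s) ()) (by simp [Ld, h1s])
    rwa [moqfa_probAcc_replicate] at this
  have hacc2 : ‖mApply B.P b‖ ^ 2 ≤ lam - ε := by
    have hnd : ¬ p ∣ t₂ + s := by
      intro hdvd
      have : t₂ + s = p + (t₂ - t₁) := by omega
      rw [this] at hdvd
      have : p ∣ t₂ - t₁ := (Nat.dvd_add_right ⟨1, (mul_one p).symm⟩).mp hdvd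
      have := Nat.le_of_dvd (by omega) this
      omega
    have := h.2 (List.replicate (t₂ + s) ()) (by simp [Ld]; exact hnd)
    rwa [moqfa_probAcc_replicate] at this
  have := prob_diff B.P_proj a b hna hnb
  linarith

end StmtAux
namespace StmtAux
variable {S : Type} {n' : ℕ}

/-- Classical state after reading `0^m`. -/
def smA (A : QFAC Unit S n') (m : ℕ) : S := A.sState (List.replicate m ())

/-- Quantum state after reading `0^m`. -/
def psA (A : QFAC Unit S n') (m : ℕ) : QState n' := A.qState (List.replicate m ())

lemma fold_fst (A : QFAC Unit S n') (x : List Unit) (s : S) (w : QState n') :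
    (x.foldl (fun p σ => (A.tr p.1 σ, mApply (A.U p.1 σ) p.2)) (s, w)).1 = x.foldl A.tr s := by
  induction x generalizing s w with
  | nil => rfl
  | cons hd tl ih => exact ih _ _

lemma smA_succ (A : QFAC Unit S n') (m : ℕ) : smA A (m + 1) = A.tr (smA A m) () := by
  unfold smA QFAC.sState
  rw [List.replicate_succ', List.foldl_append]
  rfl

lemma psA_succ (A : QFAC Unit S n') (m : ℕ) :
    psA A (m + 1) = mApply (A.U (smA A m) ()) (psA A m) := by
  unfold psA QFAC.qState
  rw [List.replicate_succ', List.foldl_append]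
  show mApply (A.U _ ()) _ = _
  rw [fold_fst]
  rfl

lemma psA_norm (A : QFAC Unit S n') (m : ℕ) : ‖psA A m‖ = 1 := by
  induction m with
  | zero => exact A.ψ0_unit
  | succ m ih => rw [psA_succ, norm_mApply_unitary (A.U_unitary _ ()), ih]

section Periodic
variable (A : QFAC Unit S n') {a b : ℕ}

lemma smA_shift (hab : smA A a = smA A b) (j : ℕ) : smA A (a + j) = smA A (b + j) := by
  induction j with
  | zero => exact hab
  | succ j ih => rw [← Nat.add_assoc, ← Nat.add_assoc, smA_succ, smA_succ, ih]

lemma smA_period (hab : smA A a = smA A b) (hlt : a < b) :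
    ∀ m, a ≤ m → ∀ t, smA A (m + t * (b - a)) = smA A m := by
  have hone : ∀ m, a ≤ m → smA A (m + (b - a)) = smA A m := by
    intro m hm
    obtain ⟨j, rfl⟩ := Nat.exists_eq_add_of_le hm
    have h1 : a + j + (b - a) = b + j := by omega
    rw [h1, ← smA_shift A hab]
  intro m hm t
  induction t with
  | zero => simp
  | succ t ih =>
      have : m + (t + 1) * (b - a) = (m + t * (b - a)) + (b - a) := by ring
      rw [this, hone _ (by omega), ih]

end Periodic

/-- Product of the unitaries applied in positions `m, m+1, …, m+j-1`. -/
def prodU (A : QFAC Unit S n') (m : ℕ) : ℕ → Matrix (Fin n') (Fin n') ℂ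
  | 0 => 1
  | j + 1 => A.U (smA A (m + j)) () * prodU A m j

lemma prodU_unitary (A : QFAC Unit S n') (m j : ℕ) :
    prodU A m j ∈ Matrix.unitaryGroup (Fin n') ℂ := by
  induction j with
  | zero => exact one_mem _
  | succ j ih => exact mul_mem (A.U_unitary _ ()) ih

lemma psA_prodU (A : QFAC Unit S n') (m j : ℕ) :
    psA A (m + j) = mApply (prodU A m j) (psA A m) := by
  induction j with
  | zero => rw [Nat.add_zero, prodU, mApply_one]
  | succ j ih => rw [← Nat.add_assoc, psA_succ, ih, prodU, mApply_mul]

lemma prodU_congr (A : QFAC Unit S n') (m₁ m₂ j : ℕ)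
    (h : ∀ i, i < j → smA A (m₁ + i) = smA A (m₂ + i)) : prodU A m₁ j = prodU A m₂ j := by
  induction j with
  | zero => rfl
  | succ j ih =>
      rw [prodU, prodU, h j (by omega), ih (fun i hi => h i (by omega))]

lemma prodU_add (A : QFAC Unit S n') (m j i : ℕ) :
    prodU A m (j + i) = prodU A (m + j) i * prodU A m j := by
  induction i with
  | zero => rw [Nat.add_zero, prodU, one_mul]
  | succ i ih =>
      rw [← Nat.add_assoc, prodU, prodU, ih, ← Nat.add_assoc, mul_assoc]

lemma prodU_pow (A : QFAC Unit S n') {a b : ℕ} (hab : smA A a = smA A b) (hlt : a < b)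
    {m₀ : ℕ} (hm₀ : a ≤ m₀) (t : ℕ) :
    prodU A m₀ (t * (b - a)) = (prodU A m₀ (b - a)) ^ t := by
  induction t with
  | zero => rw [Nat.zero_mul, pow_zero]; rfl
  | succ t ih =>
      have h1 : (t + 1) * (b - a) = t * (b - a) + (b - a) := by ring
      rw [h1, prodU_add, ih, pow_succ']
      congr 1
      apply prodU_congr
      intro i _
      have h2 : m₀ + t * (b - a) + i = (m₀ + i) + t * (b - a) := by ring
      rw [h2, smA_period A hab hlt _ (by omega)]

end StmtAux
namespace StmtAux

/-- Bezout: some natural multiple of `r` is congruent to `gcd r N` mod `N`. -/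
lemma exists_c (r N : ℕ) (hN : 0 < N) : ∃ c : ℕ, Nat.ModEq N (c * r) (Nat.gcd r N) := by
  have hbez : (Nat.gcd r N : ℤ) = r * Nat.gcdA r N + N * Nat.gcdB r N := Nat.gcd_eq_gcd_ab r N
  set u : ℤ := Nat.gcdA r N
  refine ⟨(u % N).toNat, (Nat.modEq_iff_dvd).mpr ?_⟩
  have hN' : (N : ℤ) ≠ 0 := by exact_mod_cast hN.ne'
  have hc : ((u % N).toNat : ℤ) = u % N := Int.toNat_of_nonneg (Int.emod_nonneg u hN')
  push_cast
  rw [hc]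
  have hmod : u % N = u - N * (u / N) := by rw [Int.emod_def]
  refine ⟨Nat.gcdB r N + r * (u / N), ?_⟩
  rw [hbez, hmod]
  ring

lemma dvd_shift_iff {r N c g t : ℕ} (hcr : Nat.ModEq N (c * r) g) (hgdvd : g ∣ N)
    (hg0 : 0 < g) : N ∣ t * (c * r) ↔ (N / g) ∣ t := by
  have h2 : Nat.ModEq N (t * (c * r)) (t * g) := hcr.mul_left t
  have h3 : N ∣ t * (c * r) ↔ N ∣ t * g := by
    rw [← Nat.modEq_zero_iff_dvd, ← Nat.modEq_zero_iff_dvd]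
    exact ⟨fun h => (h2.symm.trans h), fun h => h2.trans h⟩
  rw [h3, ← Nat.div_mul_cancel hgdvd, mul_dvd_mul_iff_right (by omega : g ≠ 0),
    Nat.div_mul_cancel hgdvd]

end StmtAux
namespace StmtAux

/-- Core argument: a repetition in the classical-state sequence with short period,
together with small quantum dimension, is impossible. -/
lemma main_aux (lam ε : ℝ) (hε : 0 < ε)
    (q : ℕ) (hq : q.Prime) (n : ℕ)
    (hn : IsLeast {N : ℕ | ∃ A : MOQFA Unit N, A.Recognizes (Ld q) lam ε} n)
    (p : ℕ) (hp : p.Prime) (hpn : (1 + 2 / ε) ^ (2 * n) < (p : ℝ))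
    {S : Type} (k' n' : ℕ) (hn' : n' < n)
    (A : QFAC Unit S n') (hrec : A.Recognizes (Ld (p * q)) lam ε)
    (hcon : k' < p * q)
    (a b : ℕ) (hab : a < b) (hbk : b ≤ k') (heq : smA A a = smA A b) : False := by
  have hpq0 : 0 < p * q := Nat.mul_pos hp.pos hq.pos
  set r := b - a with hr
  have hr0 : 0 < r := by omega
  set g := Nat.gcd r (p * q) with hg
  have hg0 : 0 < g := Nat.gcd_pos_of_pos_left _ hr0
  have hgr : g ≤ r := Nat.le_of_dvd hr0 (Nat.gcd_dvd_left _ _)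
  have hgdvd : g ∣ p * q := Nat.gcd_dvd_right r (p * q)
  have hgne : g ≠ p * q := by omega
  set d' := (p * q) / g with hd'
  have hd'g : d' * g = p * q := Nat.div_mul_cancel hgdvd
  have hd'0 : 0 < d' := Nat.div_pos (Nat.le_of_dvd hpq0 hgdvd) hg0
  have hd'1 : d' ≠ 1 := by
    intro h
    rw [h, one_mul] at hd'g
    omega
  obtain ⟨c, hc⟩ := exists_c r (p * q) hpq0
  set m₀ := p * q * (a + 1) with hm₀
  have hm₀a : a ≤ m₀ := by
    have := Nat.le_mul_of_pos_left (a + 1) hpq0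
    omega
  have hm₀dvd : p * q ∣ m₀ := ⟨a + 1, rfl⟩
  set V := prodU A m₀ r with hV
  set B : MOQFA Unit n' :=
    ⟨psA A m₀, psA_norm A m₀, fun _ => V ^ c, fun _ => pow_mem (prodU_unitary A m₀ r) c,
      A.P (smA A m₀), A.P_proj _⟩ with hB
  have hBprob : ∀ t, B.probAcc (List.replicate t ()) =
      A.probAcc (List.replicate (m₀ + (c * t) * r) ()) := by
    intro t
    rw [moqfa_probAcc_replicate]
    show ‖mApply (A.P (smA A m₀)) (mApply ((V ^ c) ^ t) (psA A m₀))‖ ^ 2 = _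
    rw [← pow_mul, hV, ← prodU_pow A heq hab hm₀a (c * t), ← psA_prodU]
    rw [QFAC.probAcc]
    have h1 : A.sState (List.replicate (m₀ + c * t * r) ()) = smA A m₀ :=
      smA_period A heq hab m₀ hm₀a (c * t)
    rw [h1]
    rfl
  have hmem : ∀ t : ℕ, d' ∣ t ↔ p * q ∣ m₀ + c * t * r := by
    intro t
    rw [Nat.dvd_add_right hm₀dvd]
    have h1 : c * t * r = t * (c * r) := by ring
    rw [h1, dvd_shift_iff hc hgdvd hg0]
  have hBrec : B.Recognizes (Ld d') lam ε := by
    constructor <;> intro x hx <;> rw [list_unit_eq x, hBprob]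
    · refine hrec.1 _ ?_
      show p * q ∣ (List.replicate (m₀ + c * x.length * r) ()).length
      rw [List.length_replicate]
      exact (hmem _).mp hx
    · refine hrec.2 _ (fun hdvd => hx ?_)
      refine (hmem _).mpr ?_
      simpa [Ld, List.length_replicate] using hdvd
  by_cases hqd : q ∣ d'
  · have he0 : 0 < d' / q := Nat.div_pos (Nat.le_of_dvd hd'0 hqd) hq.pos
    have hrw : (d' / q) * q = d' := Nat.div_mul_cancel hqd
    obtain ⟨B', hB'⟩ := moqfa_scale he0 B (by rwa [hrw])
    have : n ≤ n' := hn.2 ⟨B', hB'⟩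
    omega
  · have hd'p : d' = p := by
      have hco : Nat.Coprime d' q := Nat.coprime_comm.mp ((hq.coprime_iff_not_dvd).mpr hqd)
      have hdvdp : d' ∣ p := hco.dvd_of_dvd_mul_right ⟨g, hd'g.symm⟩
      rcases hp.eq_one_or_self_of_dvd _ hdvdp with h | h
      · exact absurd h hd'1
      · exact h
    have hlt' : (1 + 2 / ε) ^ (2 * n') < (p : ℝ) :=
      lt_of_le_of_lt (pow_le_pow_right₀ (one_le_base hε) (by omega)) hpn
    exact no_small_moqfa hε hlt' B (hd'p ▸ hBrec)

end StmtAux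

/-- Fix `lam ∈ (0,1)`, `ε > 0`, `lam − ε > 0`. Let `q` be prime and `n`
the minimal number of quantum basis states of an MO-1QFA recognizing `L(q)` with cut-point
`lam` isolated by `ε`. Let `p` be prime with `p > (1 + 2/ε)^(2n)`. Then any 1QFAC with `k'`
classical and `n' < n` quantum basis states recognizing `L(pq)` with the same cut-point and
isolation has `k' ≥ pq`. -/
theorem stmt_16 (lam ε : ℝ) (hlam : 0 < lam ∧ lam < 1) (hε : 0 < ε) (hlamε : 0 < lam - ε)
    (q : ℕ) (hq : q.Prime) (n : ℕ)
    (hn : IsLeast {N : ℕ | ∃ A : MOQFA Unit N, A.Recognizes (Ld q) lam ε} n)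
    (p : ℕ) (hp : p.Prime) (hpn : (1 + 2 / ε) ^ (2 * n) < (p : ℝ))
    {S : Type} [Fintype S] (k' n' : ℕ) (hk' : Fintype.card S = k') (hn' : n' < n)
    (A : QFAC Unit S n') (hrec : A.Recognizes (Ld (p * q)) lam ε) :
    p * q ≤ k' := by
  by_contra hcon
  push_neg at hcon
  obtain ⟨i, j, hne, heq⟩ := Fintype.exists_ne_map_eq_of_card_lt
    (fun m : Fin (k' + 1) => StmtAux.smA A (m : ℕ)) (by rw [Fintype.card_fin, hk']; omega)
  rcases hne.lt_or_gt with h | h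
  · exact StmtAux.main_aux lam ε hε q hq n hn p hp hpn k' n' hn' A hrec hcon i j
      (by exact_mod_cast h) (by omega) heq
  · exact StmtAux.main_aux lam ε hε q hq n hn p hp hpn k' n' hn' A hrec hcon j i
      (by exact_mod_cast h) (by omega) heq.symm

end
end

section
/- Let A be a 1QFAC over a finite alphabet Σ with classical state set S and n quantum basis states whose classical transition function δ satisfies: for all s₁, s₂ ∈ S with s₁ ≠ s₂ and all σ ∈ Σ, δ(s₁,σ) ≠ δ(s₂,σ). Then there exists an MO-1QFA over Σ with |S|·n quantum basis states whose acceptance probability on every input string x ∈ Σ* equals the acceptance probability of A on x. -/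
noncomputable section

open scoped Classical

namespace Stmt17
variable {Alph S : Type} [Fintype S] {n : ℕ}

def eqv (S : Type) [Fintype S] (n : ℕ) : S × Fin n ≃ Fin (Fintype.card S * n) :=
  ((Fintype.equivFin S).prodCongr (Equiv.refl (Fin n))).trans finProdFinEquiv

lemma mApply_apply {m : ℕ} (M : Matrix (Fin m) (Fin m) ℂ) (v : QState m) (i : Fin m) :
    mApply M v i = ∑ j, M i j * v j := rfl

def emb (s : S) (ψ : QState n) : QState (Fintype.card S * n) :=
  WithLp.toLp 2 (fun k => if ((eqv S n).symm k).1 = s then ψ ((eqv S n).symm k).2 else 0)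

@[simp] lemma emb_apply (s t : S) (ψ : QState n) (i : Fin n) :
    emb s ψ (eqv S n (t, i)) = if t = s then ψ i else 0 := by
  rw [emb]; simp only [WithLp.ofLp_toLp, PiLp.toLp_apply, Equiv.symm_apply_apply]

lemma norm_emb (s : S) (ψ : QState n) : ‖emb s ψ‖ = ‖ψ‖ := by
  rw [EuclideanSpace.norm_eq, EuclideanSpace.norm_eq]
  congr 1
  rw [← Fintype.sum_equiv (eqv S n) (fun p => ‖emb s ψ (eqv S n p)‖ ^ 2) _
    (fun p => rfl)]
  rw [Fintype.sum_prod_type]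
  rw [Finset.sum_eq_single s]
  · simp
  · intro t _ ht
    simp [ht]
  · simp

def Vmat (A : QFAC Alph S n) (σ : Alph) :
    Matrix (Fin (Fintype.card S * n)) (Fin (Fintype.card S * n)) ℂ :=
  Matrix.of fun k k' =>
    if ((eqv S n).symm k).1 = A.tr ((eqv S n).symm k').1 σ then
      A.U ((eqv S n).symm k').1 σ ((eqv S n).symm k).2 ((eqv S n).symm k').2 else 0

@[simp] lemma Vmat_apply (A : QFAC Alph S n) (σ : Alph) (t u : S) (i j : Fin n) :
    Vmat A σ (eqv S n (t, i)) (eqv S n (u, j)) =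
      if t = A.tr u σ then A.U u σ i j else 0 := by
  rw [Vmat]; simp only [Matrix.of_apply, Equiv.symm_apply_apply]

def Qmat (A : QFAC Alph S n) :
    Matrix (Fin (Fintype.card S * n)) (Fin (Fintype.card S * n)) ℂ :=
  Matrix.of fun k k' =>
    if ((eqv S n).symm k).1 = ((eqv S n).symm k').1 then
      A.P ((eqv S n).symm k').1 ((eqv S n).symm k).2 ((eqv S n).symm k').2 else 0

@[simp] lemma Qmat_apply (A : QFAC Alph S n) (t u : S) (i j : Fin n) :
    Qmat A (eqv S n (t, i)) (eqv S n (u, j)) = if t = u then A.P u i j else 0 := by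
  rw [Qmat]; simp only [Matrix.of_apply, Equiv.symm_apply_apply]

lemma sum_eqv {M : Type*} [AddCommMonoid M] (f : Fin (Fintype.card S * n) → M) :
    ∑ k, f k = ∑ t : S, ∑ i : Fin n, f (eqv S n (t, i)) := by
  rw [← Fintype.sum_equiv (eqv S n) (fun p => f (eqv S n p)) _ (fun p => rfl),
    Fintype.sum_prod_type]

lemma mApply_Vmat (A : QFAC Alph S n) (σ : Alph) (s : S) (ψ : QState n) :
    mApply (Vmat A σ) (emb s ψ) = emb (A.tr s σ) (mApply (A.U s σ) ψ) := by
  ext k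
  obtain ⟨⟨t, i⟩, rfl⟩ := (eqv S n).surjective k
  rw [mApply_apply, sum_eqv (fun k' => Vmat A σ (eqv S n (t, i)) k' * emb s ψ k')]
  simp only [Vmat_apply, emb_apply]
  rw [Finset.sum_eq_single s]
  · rcases eq_or_ne t (A.tr s σ) with rfl | h
    · simp [mApply_apply]
    · simp [h]
  · intro u _ hu
    simp [hu]
  · simp

lemma mApply_Qmat (A : QFAC Alph S n) (s : S) (ψ : QState n) :
    mApply (Qmat A) (emb s ψ) = emb s (mApply (A.P s) ψ) := by
  ext k
  obtain ⟨⟨t, i⟩, rfl⟩ := (eqv S n).surjective k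
  rw [mApply_apply, sum_eqv (fun k' => Qmat A (eqv S n (t, i)) k' * emb s ψ k')]
  simp only [Qmat_apply, emb_apply]
  rw [Finset.sum_eq_single s]
  · rcases eq_or_ne t s with rfl | h
    · simp [mApply_apply]
    · simp [h]
  · intro u _ hu
    simp [hu]
  · simp

lemma Qmat_proj (A : QFAC Alph S n) :
    (Qmat A).conjTranspose = Qmat A ∧ Qmat A * Qmat A = Qmat A := by
  constructor
  · ext k k'
    obtain ⟨⟨t, i⟩, rfl⟩ := (eqv S n).surjective k
    obtain ⟨⟨u, j⟩, rfl⟩ := (eqv S n).surjective k'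
    rw [Matrix.conjTranspose_apply, Qmat_apply, Qmat_apply]
    rcases eq_or_ne t u with rfl | h
    · simp only [if_pos rfl]
      rw [if_pos trivial, if_pos trivial,
        show star (A.P t j i) = (A.P t).conjTranspose i j from rfl, (A.P_proj t).1]
    · simp [h, Ne.symm h]
  · ext k k'
    obtain ⟨⟨t, i⟩, rfl⟩ := (eqv S n).surjective k
    obtain ⟨⟨u, j⟩, rfl⟩ := (eqv S n).surjective k'
    rw [Matrix.mul_apply, sum_eqv (fun m => Qmat A (eqv S n (t, i)) m * Qmat A m (eqv S n (u, j)))]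
    simp only [Qmat_apply]
    rw [Finset.sum_eq_single t]
    · simp only [if_pos rfl]
      rcases eq_or_ne t u with rfl | h
      · simp [← Matrix.mul_apply, (A.P_proj t).2]
      · simp [h]
    · intro v _ hv
      simp [Ne.symm hv]
    · simp

lemma Vmat_unitary (A : QFAC Alph S n)
    (hδ : ∀ s₁ s₂ : S, s₁ ≠ s₂ → ∀ σ : Alph, A.tr s₁ σ ≠ A.tr s₂ σ) (σ : Alph) :
    Vmat A σ ∈ Matrix.unitaryGroup (Fin (Fintype.card S * n)) ℂ := by
  rw [Matrix.mem_unitaryGroup_iff']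
  ext k k'
  obtain ⟨⟨t, i⟩, rfl⟩ := (eqv S n).surjective k
  obtain ⟨⟨u, j⟩, rfl⟩ := (eqv S n).surjective k'
  rw [Matrix.mul_apply,
    sum_eqv (fun m => (star (Vmat A σ)) (eqv S n (t, i)) m * Vmat A σ m (eqv S n (u, j)))]
  simp only [Matrix.star_eq_conjTranspose, Matrix.conjTranspose_apply, Vmat_apply]
  rw [Finset.sum_eq_single (A.tr t σ)]
  · simp only [if_pos rfl]
    rcases eq_or_ne t u with rfl | h
    · simp only [if_pos rfl]
      have hU : (A.U t σ).conjTranspose * A.U t σ = 1 := by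
        have h1 := A.U_unitary t σ
        rw [Matrix.mem_unitaryGroup_iff'] at h1
        rwa [Matrix.star_eq_conjTranspose] at h1
      calc ∑ l, star (A.U t σ l i) * A.U t σ l j
          = ((A.U t σ).conjTranspose * A.U t σ) i j := by
            simp [Matrix.mul_apply, Matrix.conjTranspose_apply]
        _ = (1 : Matrix (Fin n) (Fin n) ℂ) i j := by rw [hU]
        _ = _ := by
            rw [Matrix.one_apply, Matrix.one_apply]
            simp [Equiv.apply_eq_iff_eq, Prod.ext_iff]
    · have hd := hδ t u h σ
      rw [Finset.sum_eq_zero (fun l _ => by simp [hd])]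
      rw [Matrix.one_apply_ne (by simp [Equiv.apply_eq_iff_eq, Prod.ext_iff, h])]
  · intro v _ hv
    rw [Finset.sum_eq_zero (fun l _ => by simp [hv])]
  · simp

end Stmt17

/-- A 1QFAC whose classical transition is injective on states for each
letter can be simulated by an MO-1QFA with `|S|·n` quantum basis states. -/
theorem stmt_17 {Alph S : Type} [Fintype S] {n : ℕ} (A : QFAC Alph S n)
    (hδ : ∀ s₁ s₂ : S, s₁ ≠ s₂ → ∀ σ : Alph, A.tr s₁ σ ≠ A.tr s₂ σ) :
    ∃ B : MOQFA Alph (Fintype.card S * n),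
      ∀ x : List Alph, B.probAcc x = A.probAcc x := by
  refine ⟨{ ψ0 := Stmt17.emb A.s0 A.ψ0,
            ψ0_unit := by rw [Stmt17.norm_emb]; exact A.ψ0_unit,
            U := Stmt17.Vmat A,
            U_unitary := Stmt17.Vmat_unitary A hδ,
            P := Stmt17.Qmat A,
            P_proj := Stmt17.Qmat_proj A }, fun x => ?_⟩
  have key : ∀ (y : List Alph) (s : S) (ψ : QState n),
      y.foldl (fun v σ => mApply (Stmt17.Vmat A σ) v) (Stmt17.emb s ψ) =
        Stmt17.emb (y.foldl A.tr s)
          ((y.foldl (fun p σ => (A.tr p.1 σ, mApply (A.U p.1 σ) p.2)) (s, ψ)).2) := by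
    intro y
    induction y with
    | nil => intro s ψ; rfl
    | cons σ z ih =>
      intro s ψ
      simp only [List.foldl_cons]
      rw [Stmt17.mApply_Vmat]
      exact ih (A.tr s σ) (mApply (A.U s σ) ψ)
  have hq : MOQFA.qState
      { ψ0 := Stmt17.emb A.s0 A.ψ0,
        ψ0_unit := by rw [Stmt17.norm_emb]; exact A.ψ0_unit,
        U := Stmt17.Vmat A,
        U_unitary := Stmt17.Vmat_unitary A hδ,
        P := Stmt17.Qmat A,
        P_proj := Stmt17.Qmat_proj A } x
      = Stmt17.emb (A.sState x) (A.qState x) := key x A.s0 A.ψ0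
  rw [MOQFA.probAcc, hq, Stmt17.mApply_Qmat, Stmt17.norm_emb]
  rfl

end
end

section
/- Let k ≥ 1 and let A be a k-letter 1QFA over a finite alphabet Σ with n quantum basis states that recognizes a language L ⊆ Σ* with cut-point λ isolated by ε. Then the number of equivalence classes of Σ* under the Myhill–Nerode equivalence ≡_L (equivalently, the number m of states of the minimal DFA of L) satisfies m ≤ (Σ_{i=0}^{k−1}|Σ|^i)·(1 + 2/ε)^{2n}. -/
noncomputable section

/-- Myhill–Nerode equivalence: `x ≡_L y` iff `∀ z, xz ∈ L ↔ yz ∈ L`. -/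
def mnEquiv {α : Type} (L : Set (List α)) (x y : List α) : Prop :=
  ∀ z : List α, x ++ z ∈ L ↔ y ++ z ∈ L

/-- Myhill–Nerode equivalence as a setoid. -/
def mnSetoid {α : Type} (L : Set (List α)) : Setoid (List α) where
  r := mnEquiv L
  iseqv := ⟨fun _ _ => Iff.rfl, fun h z => (h z).symm, fun h1 h2 z => (h1 z).trans (h2 z)⟩

/-- A `k`-letter 1QFA. `none : Option Alph` plays the role of the blank symbol `Λ`. -/
structure MultiQFA (Alph : Type) (k n : ℕ) where
  ψ0 : QState n
  ψ0_unit : ‖ψ0‖ = 1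
  U : List (Option Alph) → Matrix (Fin n) (Fin n) ℂ
  U_unitary : ∀ w, U w ∈ Matrix.unitaryGroup (Fin n) ℂ
  P : Matrix (Fin n) (Fin n) ℂ
  P_proj : P.conjTranspose = P ∧ P * P = P

namespace MultiQFA
variable {Alph : Type} {k n : ℕ}

/-- The length-`k` suffix of `Λ^{k-1}` followed by the prefix read so far. -/
def window (k : ℕ) (pre : List Alph) : List (Option Alph) :=
  let l : List (Option Alph) := List.replicate (k - 1) none ++ pre.map some
  l.drop (l.length - k)

/-- `|ψ_x⟩ = U_{w_m} ⋯ U_{w_1} |ψ₀⟩` where `w_i` is the window after `i` letters. -/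
def qState (A : MultiQFA Alph k n) (x : List Alph) : QState n :=
  (List.range x.length).foldl
    (fun v i => mApply (A.U (window k (x.take (i + 1)))) v) A.ψ0

def probAcc (A : MultiQFA Alph k n) (x : List Alph) : ℝ := ‖mApply A.P (A.qState x)‖ ^ 2

def Recognizes (A : MultiQFA Alph k n) (L : Set (List Alph)) (lam ε : ℝ) : Prop :=
  (∀ x ∈ L, lam + ε ≤ A.probAcc x) ∧ (∀ x ∉ L, A.probAcc x ≤ lam - ε)

end MultiQFA

section Aux

open MeasureTheory Metric MultiQFA
open scoped ENNReal

variable {Alph : Type} {k n : ℕ}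

/-! ### Linear algebra facts about `mApply` -/

lemma aux_mApply_sub (M : Matrix (Fin n) (Fin n) ℂ) (a b : QState n) :
    mApply M (a - b) = mApply M a - mApply M b :=
  map_sub (Matrix.toEuclideanLin M) a b

lemma aux_mApply_mul (M N : Matrix (Fin n) (Fin n) ℂ) (v : QState n) :
    mApply (M * N) v = mApply M (mApply N v) := by
  rw [mApply, mApply, mApply, Matrix.toEuclideanLin_eq_toLin,
    Matrix.toLin_mul (PiLp.basisFun 2 ℂ (Fin n)) (PiLp.basisFun 2 ℂ (Fin n))
      (PiLp.basisFun 2 ℂ (Fin n))]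
  rfl

lemma aux_mApply_one (v : QState n) : mApply 1 v = v := by
  rw [mApply, Matrix.toEuclideanLin_eq_toLin, Matrix.toLin_one]
  rfl

lemma aux_inner_mApply (M : Matrix (Fin n) (Fin n) ℂ) (a b : QState n) :
    (inner ℂ a (mApply M.conjTranspose b) : ℂ) = inner ℂ (mApply M a) b := by
  rw [mApply, Matrix.toEuclideanLin_conjTranspose_eq_adjoint, LinearMap.adjoint_inner_right]
  rfl

lemma aux_unitary_norm {U : Matrix (Fin n) (Fin n) ℂ}
    (hU : U ∈ Matrix.unitaryGroup (Fin n) ℂ) (v : QState n) :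
    ‖mApply U v‖ = ‖v‖ := by
  have h1 : U.conjTranspose * U = 1 := by
    have := hU.1
    rwa [Matrix.star_eq_conjTranspose] at this
  rw [norm_eq_sqrt_re_inner (𝕜 := ℂ), norm_eq_sqrt_re_inner (𝕜 := ℂ) v]
  congr 2
  rw [← aux_inner_mApply, ← aux_mApply_mul, h1, aux_mApply_one]

lemma aux_proj_norm_le {P : Matrix (Fin n) (Fin n) ℂ}
    (h1 : P.conjTranspose = P) (h2 : P * P = P) (v : QState n) :
    ‖mApply P v‖ ≤ ‖v‖ := by
  have h3 : (inner ℂ (mApply P v) (mApply P v) : ℂ) = inner ℂ v (mApply P v) := by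
    rw [← aux_inner_mApply, h1, ← aux_mApply_mul, h2]
  have key : ‖mApply P v‖ ^ 2 ≤ ‖v‖ * ‖mApply P v‖ := by
    calc ‖mApply P v‖ ^ 2 = RCLike.re (inner ℂ (mApply P v) (mApply P v) : ℂ) :=
          (inner_self_eq_norm_sq _).symm
      _ = RCLike.re (inner ℂ v (mApply P v) : ℂ) := by rw [h3]
      _ ≤ ‖v‖ * ‖mApply P v‖ := re_inner_le_norm _ _
  rcases eq_or_lt_of_le (norm_nonneg (mApply P v)) with h | h
  · rw [← h]; exact norm_nonneg v
  · nlinarith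

lemma aux_sq_diff {P : Matrix (Fin n) (Fin n) ℂ}
    (h1 : P.conjTranspose = P) (h2 : P * P = P) (a b : QState n)
    (ha : ‖a‖ ≤ 1) (hb : ‖b‖ ≤ 1) :
    |‖mApply P a‖ ^ 2 - ‖mApply P b‖ ^ 2| ≤ 2 * ‖a - b‖ := by
  have hpa : ‖mApply P a‖ ≤ 1 := le_trans (aux_proj_norm_le h1 h2 a) ha
  have hpb : ‖mApply P b‖ ≤ 1 := le_trans (aux_proj_norm_le h1 h2 b) hb
  have hpa0 : 0 ≤ ‖mApply P a‖ := norm_nonneg _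
  have hpb0 : 0 ≤ ‖mApply P b‖ := norm_nonneg _
  have hd : |‖mApply P a‖ - ‖mApply P b‖| ≤ ‖a - b‖ := by
    calc |‖mApply P a‖ - ‖mApply P b‖| ≤ ‖mApply P a - mApply P b‖ :=
          abs_norm_sub_norm_le _ _
      _ = ‖mApply P (a - b)‖ := by rw [aux_mApply_sub]
      _ ≤ ‖a - b‖ := aux_proj_norm_le h1 h2 _
  have hd1 : ‖mApply P a‖ - ‖mApply P b‖ ≤ ‖a - b‖ := le_trans (le_abs_self _) hd
  have hd2 : ‖mApply P b‖ - ‖mApply P a‖ ≤ ‖a - b‖ := by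
    rw [abs_sub_comm] at hd; exact le_trans (le_abs_self _) hd
  rw [abs_le]
  constructor <;> nlinarith

/-! ### Facts about folds of unitaries -/

lemma aux_fold_norm (A : MultiQFA Alph k n) (l : List ℕ) (g : ℕ → List (Option Alph)) :
    ∀ v : QState n, ‖l.foldl (fun v i => mApply (A.U (g i)) v) v‖ = ‖v‖ := by
  induction l with
  | nil => intro v; rfl
  | cons i l ih =>
    intro v
    rw [List.foldl_cons, ih, aux_unitary_norm (A.U_unitary _)]

lemma aux_fold_dist (A : MultiQFA Alph k n) (l : List ℕ) (g : ℕ → List (Option Alph)) :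
    ∀ a b : QState n,
      dist (l.foldl (fun v i => mApply (A.U (g i)) v) a)
        (l.foldl (fun v i => mApply (A.U (g i)) v) b) = dist a b := by
  induction l with
  | nil => intro a b; rfl
  | cons i l ih =>
    intro a b
    rw [List.foldl_cons, List.foldl_cons, ih]
    rw [dist_eq_norm, dist_eq_norm, ← aux_mApply_sub, aux_unitary_norm (A.U_unitary _)]

lemma aux_qState_norm (A : MultiQFA Alph k n) (x : List Alph) : ‖A.qState x‖ = 1 := by
  rw [MultiQFA.qState, aux_fold_norm, A.ψ0_unit]

/-! ### Decomposition of the evolution on concatenations -/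

lemma aux_qState_append (A : MultiQFA Alph k n) (x z : List Alph) :
    A.qState (x ++ z) = (List.range z.length).foldl
      (fun v j => mApply (A.U (window k ((x ++ z).take (x.length + j + 1)))) v)
      (A.qState x) := by
  rw [MultiQFA.qState, MultiQFA.qState, List.length_append, List.range_add,
    List.foldl_append, List.foldl_map]
  congr 1
  apply List.foldl_ext
  intro v i hi
  rw [List.mem_range] at hi
  congr 2
  rw [List.take_append]
  have : i + 1 - x.length = 0 := by omega
  rw [this, List.take_zero, List.append_nil]

/-- The part of the padded string that determines future windows. -/
def wst (k : ℕ) (x : List Alph) : List (Option Alph) :=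
  (List.replicate (k - 1) (none : Option Alph) ++ x.map some).drop x.length

/-- The length-`min |x| (k-1)` suffix of `x`. -/
def tf (k : ℕ) (x : List Alph) : List Alph := x.drop (x.length - (k - 1))

lemma aux_wst_eq (x : List Alph) :
    wst k x = List.replicate ((k - 1) - x.length) (none : Option Alph)
      ++ (tf k x).map some := by
  rw [wst, List.drop_append, List.drop_replicate, List.length_replicate,
    tf, List.map_drop]

lemma aux_tf_length (x : List Alph) : (tf k x).length = x.length - (x.length - (k - 1)) := by
  rw [tf, List.length_drop]

lemma aux_wst_of_tf {x y : List Alph} (h : tf k x = tf k y) : wst k x = wst k y := by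
  have hl : x.length - (x.length - (k - 1)) = y.length - (y.length - (k - 1)) := by
    rw [← aux_tf_length x, ← aux_tf_length y, h]
  rw [aux_wst_eq, aux_wst_eq, h]
  congr 2
  omega

lemma aux_window_append (hk : 1 ≤ k) (x z : List Alph) {j : ℕ} (hj : j < z.length) :
    window k ((x ++ z).take (x.length + j + 1)) =
      (wst k x).drop j ++ ((z.take (j + 1)).map some).drop (j - (k - 1)) := by
  have h1 : x.length + j + 1 = x.length + (j + 1) := by omega
  rw [h1, List.take_length_add_append]
  rw [MultiQFA.window]
  simp only [List.map_append, List.length_append, List.length_replicate, List.length_map,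
    List.length_take]
  have h2 : k - 1 + (x.length + min (j + 1) z.length) - k = x.length + j := by omega
  rw [h2, ← List.append_assoc, List.drop_append]
  have h3 : x.length + j - (List.replicate (k - 1) (none : Option Alph)
      ++ x.map some).length = j - (k - 1) := by
    simp only [List.length_append, List.length_replicate, List.length_map]
    omega
  rw [h3, wst, List.drop_drop]

lemma aux_dist_eq (hk : 1 ≤ k) (A : MultiQFA Alph k n) {x y : List Alph}
    (h : tf k x = tf k y) (z : List Alph) :
    dist (A.qState (x ++ z)) (A.qState (y ++ z)) = dist (A.qState x) (A.qState y) := by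
  have hw : wst k x = wst k y := aux_wst_of_tf h
  rw [aux_qState_append, aux_qState_append]
  rw [List.foldl_ext _
    (fun (v : QState n) j =>
      mApply (A.U ((wst k x).drop j ++ ((z.take (j + 1)).map some).drop (j - (k - 1)))) v)
    (A.qState x)
    (fun v j hj => by
      rw [List.mem_range] at hj
      rw [aux_window_append hk x z hj])]
  rw [List.foldl_ext _
    (fun (v : QState n) j =>
      mApply (A.U ((wst k x).drop j ++ ((z.take (j + 1)).map some).drop (j - (k - 1)))) v)
    (A.qState y)
    (fun v j hj => by
      rw [List.mem_range] at hj
      rw [aux_window_append hk y z hj, hw])]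
  exact aux_fold_dist A _ _ _ _

/-! ### The key separation property -/

lemma aux_key (hk : 1 ≤ k) (A : MultiQFA Alph k n) (L : Set (List Alph)) {lam ε : ℝ}
    (hε : 0 < ε) (hrec : A.Recognizes L lam ε) {x y : List Alph}
    (h : tf k x = tf k y) (hne : ¬ mnEquiv L x y) :
    ε ≤ dist (A.qState x) (A.qState y) := by
  rw [mnEquiv] at hne
  push_neg at hne
  obtain ⟨z, hz⟩ := hne
  have hd := aux_dist_eq hk A h z
  have hax : ‖A.qState (x ++ z)‖ ≤ 1 := le_of_eq (aux_qState_norm A _)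
  have hay : ‖A.qState (y ++ z)‖ ≤ 1 := le_of_eq (aux_qState_norm A _)
  have hdiff : |A.probAcc (x ++ z) - A.probAcc (y ++ z)|
      ≤ 2 * dist (A.qState (x ++ z)) (A.qState (y ++ z)) := by
    rw [MultiQFA.probAcc, MultiQFA.probAcc, dist_eq_norm]
    exact aux_sq_diff A.P_proj.1 A.P_proj.2 _ _ hax hay
  have h2ε : 2 * ε ≤ |A.probAcc (x ++ z) - A.probAcc (y ++ z)| := by
    rcases hz with ⟨hx, hy⟩ | ⟨hx, hy⟩
    · have e1 := hrec.1 _ hx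
      have e2 := hrec.2 _ hy
      have := le_abs_self (A.probAcc (x ++ z) - A.probAcc (y ++ z))
      linarith
    · have e1 := hrec.1 _ hy
      have e2 := hrec.2 _ hx
      have := neg_abs_le (A.probAcc (x ++ z) - A.probAcc (y ++ z))
      linarith
  rw [hd] at hdiff
  linarith

/-! ### The volume packing bound -/

lemma aux_packing {d : ℕ} {ε : ℝ} (hε : 0 < ε) (F : Finset (EuclideanSpace ℝ (Fin d)))
    (hnorm : ∀ x ∈ F, ‖x‖ = 1) (hsep : ∀ x ∈ F, ∀ y ∈ F, x ≠ y → ε ≤ dist x y) :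
    (F.card : ℝ) ≤ (1 + 2 / ε) ^ d := by
  classical
  set μ := (volume : Measure (EuclideanSpace ℝ (Fin d))) with hμ
  set r : ℝ := ε / 2 with hr
  have hr0 : 0 < r := by positivity
  have hfr : Module.finrank ℝ (EuclideanSpace ℝ (Fin d)) = d := by
    rw [finrank_euclideanSpace, Fintype.card_fin]
  have hdisj : (↑F : Set (EuclideanSpace ℝ (Fin d))).PairwiseDisjoint
      (fun x => Metric.ball x r) := by
    intro a ha b hb hab
    refine Metric.ball_disjoint_ball ?_
    have := hsep a ha b hb hab
    rw [hr]; linarith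
  have hmeas : μ (⋃ x ∈ F, Metric.ball x r) = ∑ x ∈ F, μ (Metric.ball x r) :=
    measure_biUnion_finset hdisj fun b _ => measurableSet_ball
  have hsub : (⋃ x ∈ F, Metric.ball x r) ⊆ Metric.ball 0 (1 + r) := by
    intro p hp
    simp only [Set.mem_iUnion] at hp
    obtain ⟨x, hx, hpx⟩ := hp
    rw [Metric.mem_ball] at hpx ⊢
    have h1 : dist p 0 ≤ dist p x + dist x 0 := dist_triangle _ _ _
    have h2 : dist x 0 = 1 := by rw [dist_zero_right, hnorm x hx]
    linarith
  have hball : ∀ x : EuclideanSpace ℝ (Fin d),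
      μ (Metric.ball x r) = ENNReal.ofReal (r ^ d) * μ (Metric.ball 0 1) := by
    intro x
    rw [Measure.addHaar_ball_of_pos μ x hr0, hfr]
  have hBig : μ (Metric.ball (0 : EuclideanSpace ℝ (Fin d)) (1 + r))
      = ENNReal.ofReal ((1 + r) ^ d) * μ (Metric.ball 0 1) := by
    rw [Measure.addHaar_ball_of_pos μ 0 (by linarith : (0:ℝ) < 1 + r), hfr]
  have hc0 : μ (Metric.ball (0 : EuclideanSpace ℝ (Fin d)) 1) ≠ 0 :=
    (Metric.measure_ball_pos μ 0 one_pos).ne'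
  have hcT : μ (Metric.ball (0 : EuclideanSpace ℝ (Fin d)) 1) ≠ ⊤ :=
    measure_ball_lt_top.ne
  have hchain : (F.card : ℝ≥0∞) * ENNReal.ofReal (r ^ d) * μ (Metric.ball 0 1)
      ≤ ENNReal.ofReal ((1 + r) ^ d) * μ (Metric.ball 0 1) := by
    calc (F.card : ℝ≥0∞) * ENNReal.ofReal (r ^ d) * μ (Metric.ball 0 1)
        = ∑ _x ∈ F, ENNReal.ofReal (r ^ d) * μ (Metric.ball 0 1) := by
          rw [Finset.sum_const, nsmul_eq_mul, mul_assoc]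
      _ = ∑ x ∈ F, μ (Metric.ball x r) := by
          refine Finset.sum_congr rfl fun x _ => ?_
          rw [hball x]
      _ = μ (⋃ x ∈ F, Metric.ball x r) := hmeas.symm
      _ ≤ μ (Metric.ball 0 (1 + r)) := measure_mono hsub
      _ = ENNReal.ofReal ((1 + r) ^ d) * μ (Metric.ball 0 1) := hBig
  rw [ENNReal.mul_le_mul_iff_left hc0 hcT] at hchain
  have hcard : (F.card : ℝ) * r ^ d ≤ (1 + r) ^ d := by
    have h4 : ((F.card : ℝ≥0∞)) = ENNReal.ofReal (F.card : ℝ) := by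
      rw [ENNReal.ofReal_natCast]
    rw [h4, ← ENNReal.ofReal_mul (by positivity)] at hchain
    exact (ENNReal.ofReal_le_ofReal_iff (by positivity)).1 hchain
  have h5 : (F.card : ℝ) ≤ ((1 + r) / r) ^ d := by
    rw [div_pow, le_div_iff₀ (by positivity)]
    exact hcard
  have h6 : (1 + r) / r = 1 + 2 / ε := by
    rw [hr]; field_simp; ring
  rwa [h6] at h5

/-! ### The abstract counting argument -/

lemma aux_count {Alph : Type} [Fintype Alph] {k D : ℕ} (hk : 1 ≤ k) {Q : Type} {ε : ℝ}
    (hε : 0 < ε) (f : Q → List Alph) (g : Q → EuclideanSpace ℝ (Fin D))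
    (hflen : ∀ q, (f q).length ≤ k - 1)
    (hgnorm : ∀ q, ‖g q‖ = 1)
    (hsep : ∀ q1 q2, f q1 = f q2 → q1 ≠ q2 → ε ≤ dist (g q1) (g q2)) :
    Finite Q ∧ (Nat.card Q : ℝ)
      ≤ (∑ i ∈ Finset.range k, (Fintype.card Alph : ℝ) ^ i) * (1 + 2 / ε) ^ D := by
  classical
  set W := ∑ i ∈ Finset.range k, (Fintype.card Alph : ℝ) ^ i with hW
  set B := (1 + 2 / ε) ^ D with hB
  have hB0 : (0 : ℝ) ≤ B := by positivity
  have main : ∀ F : Finset Q, (F.card : ℝ) ≤ W * B := by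
    intro F
    have hfib := Finset.card_eq_sum_card_fiberwise
      (fun x (hx : x ∈ F) => Finset.mem_image_of_mem f hx)
    have himg : ((F.image f).card : ℝ) ≤ W := by
      have h1 : (F.image f).card ≤ Fintype.card (Σ i : Fin k, List.Vector Alph i) := by
        rw [← Finset.card_univ]
        apply Finset.card_le_card_of_injOn
          (fun l => (⟨⟨(l.take (k - 1)).length, by rw [List.length_take]; omega⟩,
            ⟨l.take (k - 1), rfl⟩⟩ : Σ i : Fin k, List.Vector Alph i))
          (fun _ _ => Finset.mem_univ _)
        intro l1 hl1 l2 hl2 he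
        rw [Finset.mem_coe, Finset.mem_image] at hl1 hl2
        obtain ⟨q1, -, rfl⟩ := hl1
        obtain ⟨q2, -, rfl⟩ := hl2
        have e1 := congrArg (fun s : (Σ i : Fin k, List.Vector Alph i) => s.2.toList) he
        dsimp at e1
        rwa [List.take_of_length_le (hflen q1), List.take_of_length_le (hflen q2)] at e1
      have h2 : (Fintype.card (Σ i : Fin k, List.Vector Alph i) : ℝ) = W := by
        rw [Fintype.card_sigma]
        simp only [card_vector]
        push_cast
        rw [hW]
        exact Fin.sum_univ_eq_sum_range _ k
      calc ((F.image f).card : ℝ) ≤ _ := Nat.cast_le.2 h1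
        _ = W := h2
    have hfiber : ∀ w ∈ F.image f, (((F.filter (fun q => f q = w)).card : ℝ)) ≤ B := by
      intro w hw
      set Ff := F.filter (fun q => f q = w) with hFf
      have hfeq : ∀ q ∈ Ff, f q = w := fun q hq => (Finset.mem_filter.1 hq).2
      have hinj : Set.InjOn g ↑Ff := by
        intro q1 h1 h2q hq2 hgeq
        by_contra hne
        have := hsep q1 h2q (by rw [hfeq q1 h1, hfeq h2q hq2]) hne
        rw [hgeq, dist_self] at this
        linarith
      have hcard : (Ff.image g).card = Ff.card := Finset.card_image_of_injOn hinj
      have hnorms : ∀ x ∈ Ff.image g, ‖x‖ = 1 := by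
        intro x hx
        rw [Finset.mem_image] at hx
        obtain ⟨q, -, rfl⟩ := hx
        exact hgnorm q
      have hseps : ∀ x ∈ Ff.image g, ∀ y ∈ Ff.image g, x ≠ y → ε ≤ dist x y := by
        intro x hx y hy hxy
        rw [Finset.mem_image] at hx hy
        obtain ⟨q1, hq1, rfl⟩ := hx
        obtain ⟨q2, hq2, rfl⟩ := hy
        exact hsep q1 q2 (by rw [hfeq q1 hq1, hfeq q2 hq2])
          (fun h => hxy (by rw [h]))
      have hpack := aux_packing hε (Ff.image g) hnorms hseps
      rw [hcard] at hpack
      exact hpack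
    calc (F.card : ℝ) = ∑ w ∈ F.image f, ((F.filter (fun q => f q = w)).card : ℝ) := by
          rw [hfib]; push_cast; rfl
      _ ≤ ∑ _w ∈ F.image f, B := Finset.sum_le_sum hfiber
      _ = ((F.image f).card : ℝ) * B := by rw [Finset.sum_const, nsmul_eq_mul]
      _ ≤ W * B := mul_le_mul_of_nonneg_right himg hB0
  have hfin : Finite Q := by
    by_contra hinf
    rw [not_finite_iff_infinite] at hinf
    obtain ⟨F, hF⟩ := Infinite.exists_subset_card_eq Q (⌈W * B⌉₊ + 1)
    have h1 := main F
    rw [hF] at h1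
    have h2 := Nat.le_ceil (W * B)
    push_cast at h1
    linarith
  refine ⟨hfin, ?_⟩
  haveI := Fintype.ofFinite Q
  rw [Nat.card_eq_fintype_card, ← Finset.card_univ]
  exact main Finset.univ

end Aux

/-- If a `k`-letter 1QFA with `n` quantum basis states recognizes `L`
with cut-point `lam` isolated by `ε`, then the number of Myhill–Nerode classes of `L`
is at most `(∑_{i=0}^{k−1}|Alph|^i)(1 + 2/ε)^(2n)`. -/
theorem stmt_19 {Alph : Type} [Fintype Alph] {k n : ℕ} (hk : 1 ≤ k)
    (A : MultiQFA Alph k n) (L : Set (List Alph)) (lam ε : ℝ)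
    (hlam : 0 < lam ∧ lam < 1) (hε : 0 < ε)
    (hrec : A.Recognizes L lam ε) :
    Finite (Quotient (mnSetoid L)) ∧
    (Nat.card (Quotient (mnSetoid L)) : ℝ)
      ≤ (∑ i ∈ Finset.range k, (Fintype.card Alph : ℝ) ^ i) * (1 + 2 / ε) ^ (2 * n) := by
  classical
  have hD : Module.finrank ℝ (QState n) = 2 * n := by
    rw [← Module.finrank_mul_finrank ℝ ℂ (QState n), Complex.finrank_real_complex,
      finrank_euclideanSpace, Fintype.card_fin]
  set φ := (stdOrthonormalBasis ℝ (QState n)).repr with hφ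
  have hcount := aux_count (Alph := Alph) hk hε
    (fun q : Quotient (mnSetoid L) => tf k q.out)
    (fun q : Quotient (mnSetoid L) => φ (A.qState q.out))
    (fun q => by simp only [tf, List.length_drop]; omega)
    (fun q => by rw [LinearIsometryEquiv.norm_map]; exact aux_qState_norm A _)
    (fun q1 q2 hfeq hne => by
      rw [LinearIsometryEquiv.dist_map]
      refine aux_key hk A L hε hrec hfeq ?_
      intro hR
      exact hne (by rw [← Quotient.out_eq q1, ← Quotient.out_eq q2]; exact Quotient.sound hR))
  rw [hD] at hcount
  exact hcount

end
end
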